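/- The F-score is a ranking score: on the sample space Ω = {tn, fp, fn, tp} with satisfaction S(tn) = S(tp) = 1 and S(fp) = S(fn) = 0, fix β > 0 and define the importance I by I(tn) = 0, I(fp) = 1/(1+β²), I(fn) = β²/(1+β²), I(tp) = 1. Then for every performance p with (1+β²)·p(tp) + β²·p(fn) + p(fp) ≠ 0, p belongs to dom(R_I) and R_I(p) = (1+β²)·p(tp) / ((1+β²)·p(tp) + β²·p(fn) + p(fp)), i.e., R_I equals the F-score F_β. -/

import Mathlib

/-- The four outcomes of two-class crisp classification. -/
inductive Outcome : Type
  | tn | fp | fn | tp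
  deriving DecidableEq

instance instFintypeOutcome : Fintype Outcome :=
  ⟨{Outcome.tn, Outcome.fp, Outcome.fn, Outcome.tp}, fun x => by cases x <;> simp⟩

/-- A performance on a finite sample space: nonnegative and summing to one. -/
def IsPerformance {Ω : Type*} [Fintype Ω] (p : Ω → ℝ) : Prop :=
  (∀ ω, 0 ≤ p ω) ∧ ∑ ω, p ω = 1

/-- An importance: nonnegative and nonzero. -/
def IsImportance {Ω : Type*} [Fintype Ω] (I : Ω → ℝ) : Prop :=
  (∀ ω, 0 ≤ I ω) ∧ ∃ ω, 0 < I ω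

/-- The ranking score with importance `I` and satisfaction `S`. -/
noncomputable def rankingScore {Ω : Type*} [Fintype Ω] (I S p : Ω → ℝ) : ℝ :=
  (∑ ω, I ω * S ω * p ω) / (∑ ω, I ω * p ω)

/-- The satisfaction for two-class crisp classification: 1 on correct results,
0 on incorrect ones. -/
def Ssat : Outcome → ℝ
  | .tn => 1
  | .fp => 0
  | .fn => 0
  | .tp => 1

/-- The importance corresponding to the F-score with parameter `β`. -/
noncomputable def Ifbeta (β : ℝ) : Outcome → ℝ
  | .tn => 0
  | .fp => 1 / (1 + β ^ 2)
  | .fn => β ^ 2 / (1 + β ^ 2)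
  | .tp => 1

theorem stmt18 (β : ℝ) (hβ : 0 < β) (p : Outcome → ℝ) (hp : IsPerformance p)
    (hden : (1 + β ^ 2) * p Outcome.tp + β ^ 2 * p Outcome.fn + p Outcome.fp ≠ 0) :
    (∑ ω, Ifbeta β ω * p ω ≠ 0) ∧
    rankingScore (Ifbeta β) Ssat p =
      (1 + β ^ 2) * p Outcome.tp /
        ((1 + β ^ 2) * p Outcome.tp + β ^ 2 * p Outcome.fn + p Outcome.fp) := by
  have hb : (1 + β ^ 2) ≠ 0 := by positivity
  have hsum : ∀ f : Outcome → ℝ, ∑ ω, f ω = f .tn + f .fp + f .fn + f .tp := by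
    intro f
    show Finset.sum _ f = _
    rw [show (Finset.univ : Finset Outcome) = {.tn, .fp, .fn, .tp} from rfl]
    simp [Finset.sum_insert, Finset.mem_insert]
    ring
  constructor
  · rw [hsum]
    simp only [Ifbeta]
    intro h
    apply hden
    field_simp at h
    linarith
  · unfold rankingScore
    rw [hsum, hsum]
    simp only [Ifbeta, Ssat]
    rw [div_eq_div_iff ?h1 hden]
    · field_simp
      ring
    · intro h; apply hden; field_simp at h; linarith
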